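/- Let γ^{(1)} and γ^{(2)} be two families of histograms each satisfying the bound condition, such that γ^{(1)}_{n,n'} ≼ γ^{(2)}_{n,n'} for all n' ≥ 1 and 0 ≤ n ≤ n'. Then for every L ≥ 2 and all widths n_0, n_1, …, n_{L−1} ≥ 1, ‖B^{(γ^{(1)})}_{n_{L−1}} M_{n_{L−2},n_{L−1}} ⋯ B^{(γ^{(1)})}_{n_1} M_{n_0,n_1} e^{n_0}‖₁ ≤ ‖B^{(γ^{(2)})}_{n_{L−1}} M_{n_{L−2},n_{L−1}} ⋯ B^{(γ^{(2)})}_{n_1} M_{n_0,n_1} e^{n_0}‖₁, where ‖·‖₁ is the sum of entries. -/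

import Mathlib

open scoped Classical

noncomputable section

/-- Tail sum `Σ_{j ≥ J} v j` of a finitely supported histogram `v : ℕ →₀ ℕ`. -/
def tailSum (v : ℕ →₀ ℕ) (J : ℕ) : ℕ :=
  ∑ j ∈ v.support.filter (fun j => J ≤ j), v j

/-- Order relation on histograms: `v ≼ w` iff every tail sum of `v` is at most that of `w`. -/
def HistLE (v w : ℕ →₀ ℕ) : Prop :=
  ∀ J : ℕ, tailSum v J ≤ tailSum w J

/-- Downward move: `dm v 0 = 0` and `dm v (i+1) = v i`. -/
def dm (v : ℕ →₀ ℕ) : ℕ →₀ ℕ :=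
  Finsupp.embDomain ⟨Nat.succ, Nat.succ_injective⟩ v

/-- Clipping `cl_k`: keeps values below `k`, puts the tail sum at `k`, zero above `k`. -/
def clip (k : ℕ) (v : ℕ →₀ ℕ) : ℕ →₀ ℕ :=
  Finsupp.onFinset (Finset.range (k + 1))
    (fun i => if i < k then v i else if i = k then tailSum v k else 0)
    (by
      intro a ha
      simp only [Finset.mem_range]
      by_contra hc
      push_neg at hc
      have h1 : ¬ a < k := by omega
      have h2 : a ≠ k := by omega
      simp [h1, h2] at ha)

/-- Activation pattern of a ReLU layer `h ∈ RL(n, n')` given by `W, b`. -/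
def layerPattern {n n' : ℕ} (W : Matrix (Fin n') (Fin n) ℝ) (b : Fin n' → ℝ)
    (x : Fin n → ℝ) : Fin n' → Bool :=
  fun j => decide (0 < W.mulVec x j + b j)

/-- `|s|₁`, the number of ones in a `Bool`-valued pattern. -/
def bweight {m : ℕ} (s : Fin m → Bool) : ℕ :=
  (Finset.univ.filter (fun j => s j = true)).card

/-- Activation histogram of a ReLU layer: `i ↦ #{achievable patterns s with |s|₁ = i}`. -/
def actHist {n n' : ℕ} (W : Matrix (Fin n') (Fin n) ℝ) (b : Fin n' → ℝ) : ℕ →₀ ℕ :=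
  Finsupp.onFinset (Finset.range (n' + 1))
    (fun i => (Finset.univ.filter (fun s : Fin n' → Bool =>
        (∃ x, layerPattern W b x = s) ∧ bweight s = i)).card)
    (by
      intro a ha
      simp only [Finset.mem_range]
      by_contra hc
      push_neg at hc
      apply ha
      rw [Finset.card_eq_zero, Finset.filter_eq_empty_iff]
      intro s _
      rintro ⟨-, rfl⟩
      have hle : bweight s ≤ n' :=
        le_trans (Finset.card_filter_le _ _) (by simp)
      omega)

/-- The bound condition for a family of histograms `γ = (γ_{n,n'})`. -/
def BoundCondition (γ : ℕ → ℕ → (ℕ →₀ ℕ)) : Prop :=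
  ∀ n' : ℕ, 1 ≤ n' → ∀ n : ℕ, n ≤ n' →
    (∀ (W : Matrix (Fin n') (Fin n) ℝ) (b : Fin n' → ℝ),
        HistLE (actHist W b) (γ n n')) ∧
    (∀ ntil : ℕ, n ≤ ntil → ntil ≤ n' → HistLE (γ n n') (γ ntil n'))

/-- `ℓ₁`-norm (sum of entries) of a histogram. -/
def l1 (v : ℕ →₀ ℕ) : ℕ := ∑ j ∈ v.support, v j

/-- The action of the matrix `B^{(γ)}_{n'}` on a histogram supported on `{0, …, n'}`:
`(B v)(i) = Σ_{j=0}^{n'} v(j) ⬝ (cl_j(γ_{j,n'}))(i)`. -/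
def Bop (γ : ℕ → ℕ → (ℕ →₀ ℕ)) (n' : ℕ) (v : ℕ →₀ ℕ) : ℕ →₀ ℕ :=
  ∑ j ∈ Finset.range (n' + 1), v j • clip j (γ j n')

/-- `iterBound γ n i` is the histogram
`B^{(γ)}_{n_i} M_{n_{i-1},n_i} ⋯ B^{(γ)}_{n_1} M_{n_0,n_1} e^{n_0}`, where the action of
`M_{n,n'}` on a histogram supported on `{0, …, n}` is the clipping `cl_{n'}`. -/
def iterBound (γ : ℕ → ℕ → (ℕ →₀ ℕ)) (n : ℕ → ℕ) : ℕ → (ℕ →₀ ℕ)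
  | 0 => Finsupp.single (n 0) 1
  | i + 1 => Bop γ (n (i + 1)) (clip (n (i + 1)) (iterBound γ n i))

lemma tailSum_eq_sum (v : ℕ →₀ ℕ) (J : ℕ) (s : Finset ℕ) (hs : v.support ⊆ s) :
    tailSum v J = ∑ j ∈ s.filter (fun j => J ≤ j), v j := by
  unfold tailSum
  apply Finset.sum_subset (Finset.filter_subset_filter _ hs)
  intro x hx hnx
  by_contra h
  exact hnx (Finset.mem_filter.mpr ⟨Finsupp.mem_support_iff.mpr h,
    (Finset.mem_filter.mp hx).2⟩)

lemma tailSum_eq_zero (v : ℕ →₀ ℕ) (J : ℕ) (h : ∀ i, J ≤ i → v i = 0) :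
    tailSum v J = 0 :=
  Finset.sum_eq_zero fun i hi => h i (Finset.mem_filter.mp hi).2

lemma tailSum_succ (v : ℕ →₀ ℕ) (J : ℕ) :
    tailSum v J = v J + tailSum v (J + 1) := by
  rw [tailSum_eq_sum v J (insert J v.support) (Finset.subset_insert _ _),
      tailSum_eq_sum v (J + 1) (insert J v.support) (Finset.subset_insert _ _)]
  have hs : (insert J v.support).filter (fun j => J ≤ j)
      = insert J ((insert J v.support).filter (fun j => J + 1 ≤ j)) := by
    ext x
    by_cases hx : x = J
    · subst hx; simp
    · simp only [Finset.mem_filter, Finset.mem_insert, hx, false_or]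
      constructor <;> rintro ⟨h1, h2⟩ <;> exact ⟨h1, by omega⟩
  rw [hs, Finset.sum_insert (by simp)]

lemma clip_apply (k : ℕ) (v : ℕ →₀ ℕ) (i : ℕ) :
    clip k v i = if i < k then v i else if i = k then tailSum v k else 0 := rfl

lemma clip_support (k : ℕ) (v : ℕ →₀ ℕ) :
    (clip k v).support ⊆ Finset.range (k + 1) :=
  Finsupp.support_onFinset_subset

lemma tailSum_clip_of_le_aux (k : ℕ) (v : ℕ →₀ ℕ) :
    ∀ d J, J ≤ k → k - J = d → tailSum (clip k v) J = tailSum v J := by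
  intro d
  induction d with
  | zero =>
    intro J h hd
    have hJ : J = k := by omega
    subst hJ
    rw [tailSum_succ (clip J v) J, tailSum_eq_zero (clip J v) (J + 1)
      (fun i hi => by
        rw [clip_apply]
        have h1 : ¬ i < J := by omega
        have h2 : i ≠ J := by omega
        simp [h1, h2])]
    rw [clip_apply]
    simp
  | succ d ih =>
    intro J h hd
    have hJk : J < k := by omega
    rw [tailSum_succ (clip k v) J, ih (J + 1) (by omega) (by omega),
      tailSum_succ v J, clip_apply]
    simp [hJk]

lemma tailSum_clip_of_le {k J : ℕ} (h : J ≤ k) (v : ℕ →₀ ℕ) :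
    tailSum (clip k v) J = tailSum v J :=
  tailSum_clip_of_le_aux k v (k - J) J h rfl

lemma tailSum_clip (k : ℕ) (v : ℕ →₀ ℕ) (J : ℕ) :
    tailSum (clip k v) J = if J ≤ k then tailSum v J else 0 := by
  by_cases h : J ≤ k
  · rw [if_pos h, tailSum_clip_of_le h]
  · rw [if_neg h]
    apply tailSum_eq_zero
    intro i hi
    rw [clip_apply]
    have h1 : ¬ i < k := by omega
    have h2 : i ≠ k := by omega
    simp [h1, h2]

lemma tailSum_add (v w : ℕ →₀ ℕ) (J : ℕ) :
    tailSum (v + w) J = tailSum v J + tailSum w J := by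
  rw [tailSum_eq_sum (v + w) J (v.support ∪ w.support) Finsupp.support_add,
      tailSum_eq_sum v J (v.support ∪ w.support) Finset.subset_union_left,
      tailSum_eq_sum w J (v.support ∪ w.support) Finset.subset_union_right,
      ← Finset.sum_add_distrib]
  simp

lemma tailSum_zero (J : ℕ) : tailSum (0 : ℕ →₀ ℕ) J = 0 := by
  simp [tailSum]

lemma tailSum_smul (c : ℕ) (v : ℕ →₀ ℕ) (J : ℕ) :
    tailSum (c • v) J = c * tailSum v J := by
  rw [tailSum_eq_sum (c • v) J v.support (Finsupp.support_smul),
      tailSum, Finset.mul_sum]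
  simp

lemma tailSum_finset_sum {ι : Type*} (s : Finset ι) (f : ι → ℕ →₀ ℕ) (J : ℕ) :
    tailSum (∑ i ∈ s, f i) J = ∑ i ∈ s, tailSum (f i) J := by
  induction s using Finset.induction with
  | empty => simp [tailSum_zero]
  | insert _ _ h ih =>
    rw [Finset.sum_insert h, Finset.sum_insert h, tailSum_add, ih]

lemma tailSum_eq_Ico (m : ℕ) (x : ℕ →₀ ℕ) (hx : x.support ⊆ Finset.range (m + 1))
    (t : ℕ) : tailSum x t = ∑ j ∈ Finset.Ico t (m + 1), x j := by
  rw [tailSum_eq_sum x t (Finset.range (m + 1)) hx]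
  apply Finset.sum_congr _ (fun _ _ => rfl)
  ext j
  simp only [Finset.mem_filter, Finset.mem_range, Finset.mem_Ico]
  omega

lemma sum_mul_mono (m : ℕ) (c : ℕ → ℕ) (hc : ∀ t, t < m → c t ≤ c (t + 1))
    (v w : ℕ →₀ ℕ) (hv : v.support ⊆ Finset.range (m + 1))
    (hw : w.support ⊆ Finset.range (m + 1)) (hvw : HistLE v w) :
    ∑ j ∈ Finset.range (m + 1), v j * c j ≤ ∑ j ∈ Finset.range (m + 1), w j * c j := by
  set d : ℕ → ℕ := fun t => if t = 0 then c 0 else c t - c (t - 1) with hd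
  have hcd : ∀ j, j ≤ m → c j = ∑ t ∈ Finset.range (j + 1), d t := by
    intro j hj
    induction j with
    | zero => simp [hd]
    | succ j ih =>
      rw [Finset.sum_range_succ, ← ih (by omega)]
      have := hc j (by omega)
      simp only [hd, Nat.succ_ne_zero, if_false, Nat.add_sub_cancel]
      omega
  have key : ∀ x : ℕ →₀ ℕ, x.support ⊆ Finset.range (m + 1) →
      ∑ j ∈ Finset.range (m + 1), x j * c j
        = ∑ t ∈ Finset.range (m + 1), d t * tailSum x t := by
    intro x hx
    calc ∑ j ∈ Finset.range (m + 1), x j * c j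
        = ∑ j ∈ Finset.range (m + 1), ∑ t ∈ Finset.range (j + 1), x j * d t := by
          apply Finset.sum_congr rfl
          intro j hj
          have hjm : j ≤ m := by
            have := Finset.mem_range.mp hj
            omega
          rw [hcd j hjm, Finset.mul_sum]
      _ = ∑ t ∈ Finset.range (m + 1), ∑ j ∈ Finset.Ico t (m + 1), x j * d t := by
          apply Finset.sum_comm'
          intro j t
          simp only [Finset.mem_range, Finset.mem_Ico]
          omega
      _ = ∑ t ∈ Finset.range (m + 1), d t * tailSum x t := by
          apply Finset.sum_congr rfl
          intro t ht
          rw [← Finset.sum_mul, tailSum_eq_Ico m x hx t, mul_comm]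
  rw [key v hv, key w hw]
  exact Finset.sum_le_sum fun t _ => Nat.mul_le_mul_left _ (hvw t)

lemma tailSum_Bop (γ : ℕ → ℕ → (ℕ →₀ ℕ)) (n' : ℕ) (v : ℕ →₀ ℕ) (J : ℕ) :
    tailSum (Bop γ n' v) J
      = ∑ j ∈ Finset.range (n' + 1), v j * tailSum (clip j (γ j n')) J := by
  unfold Bop
  rw [tailSum_finset_sum]
  exact Finset.sum_congr rfl fun j _ => tailSum_smul _ _ _

lemma clip_mono (k : ℕ) {v w : ℕ →₀ ℕ} (h : HistLE v w) :
    HistLE (clip k v) (clip k w) := by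
  intro J
  rw [tailSum_clip, tailSum_clip]
  split
  · exact h J
  · exact le_refl 0

lemma Bop_mono_left (γ : ℕ → ℕ → (ℕ →₀ ℕ)) (n' : ℕ)
    (hγ : ∀ t, t ≤ n' → ∀ t', t ≤ t' → t' ≤ n' → HistLE (γ t n') (γ t' n'))
    (v w : ℕ →₀ ℕ) (hv : v.support ⊆ Finset.range (n' + 1))
    (hw : w.support ⊆ Finset.range (n' + 1)) (hvw : HistLE v w) :
    HistLE (Bop γ n' v) (Bop γ n' w) := by
  intro J
  rw [tailSum_Bop, tailSum_Bop]
  apply sum_mul_mono n' _ _ v w hv hw hvw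
  intro t ht
  rw [tailSum_clip, tailSum_clip]
  by_cases hJ : J ≤ t
  · rw [if_pos hJ, if_pos (by omega)]
    exact hγ t (by omega) (t + 1) (by omega) (by omega) J
  · rw [if_neg hJ]
    exact Nat.zero_le _

lemma Bop_mono_gamma (γ1 γ2 : ℕ → ℕ → (ℕ →₀ ℕ)) (n' : ℕ)
    (hle : ∀ j, j ≤ n' → HistLE (γ1 j n') (γ2 j n')) (v : ℕ →₀ ℕ) :
    HistLE (Bop γ1 n' v) (Bop γ2 n' v) := by
  intro J
  rw [tailSum_Bop, tailSum_Bop]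
  apply Finset.sum_le_sum
  intro j hj
  apply Nat.mul_le_mul_left
  rw [tailSum_clip, tailSum_clip]
  split
  · exact hle j (by simp only [Finset.mem_range] at hj; omega) J
  · exact le_refl 0

/-- Theorem 3: if two families of histograms satisfy the bound condition and
`γ^{(1)}_{n,n'} ≼ γ^{(2)}_{n,n'}` everywhere, then the matrix-computation upper bound for
any widths computed with `γ^{(1)}` is at most the one computed with `γ^{(2)}`. -/
theorem statement5 (γ1 γ2 : ℕ → ℕ → (ℕ →₀ ℕ))
    (h1 : BoundCondition γ1) (h2 : BoundCondition γ2)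
    (hle : ∀ n' : ℕ, 1 ≤ n' → ∀ n : ℕ, n ≤ n' → HistLE (γ1 n n') (γ2 n n'))
    (L : ℕ) (hL : 2 ≤ L) (n : ℕ → ℕ) (hn : ∀ i : ℕ, i < L → 1 ≤ n i) :
    l1 (iterBound γ1 n (L - 1)) ≤ l1 (iterBound γ2 n (L - 1)) := by
  have main : ∀ i, i ≤ L - 1 → HistLE (iterBound γ1 n i) (iterBound γ2 n i) := by
    intro i
    induction i with
    | zero => exact fun _ J => le_refl _
    | succ i ih =>
      intro hi
      have hlt : i + 1 < L := by omega
      have hn' : 1 ≤ n (i + 1) := hn (i + 1) hlt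
      have ihh : HistLE (iterBound γ1 n i) (iterBound γ2 n i) := ih (by omega)
      have step1 : HistLE (Bop γ1 (n (i + 1)) (clip (n (i + 1)) (iterBound γ1 n i)))
          (Bop γ1 (n (i + 1)) (clip (n (i + 1)) (iterBound γ2 n i))) := by
        apply Bop_mono_left γ1 (n (i + 1)) _ _ _ (clip_support _ _) (clip_support _ _)
          (clip_mono _ ihh)
        intro t ht t' htt' ht'
        exact (h1 (n (i + 1)) hn' t ht).2 t' htt' ht'
      have step2 : HistLE (Bop γ1 (n (i + 1)) (clip (n (i + 1)) (iterBound γ2 n i)))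
          (Bop γ2 (n (i + 1)) (clip (n (i + 1)) (iterBound γ2 n i))) :=
        Bop_mono_gamma γ1 γ2 (n (i + 1)) (fun j hj => hle (n (i + 1)) hn' j hj) _
      exact fun J => le_trans (step1 J) (step2 J)
  have hfin := main (L - 1) le_rfl 0
  have hl1 : ∀ v : ℕ →₀ ℕ, l1 v = tailSum v 0 := by
    intro v
    unfold l1 tailSum
    congr 1
    simp
  rw [hl1, hl1]
  exact hfin
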